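/- Let t₀ ∈ ℂ satisfy μ² < |t₀| < 1 and μ < |λ(t₀)| < 1. Then for every integer k ≥ 1, |λ(μ^{4k} t₀)| < |λ(t₀)|. -/

import Mathlib

open Complex Set Filter MeasureTheory

/-- `μ = (R - √(R²-4))/2`. -/
noncomputable def mu (R : ℝ) : ℝ := (R - Real.sqrt (R ^ 2 - 4)) / 2

/-- The Möbius transformation `λ(z) = (z - μ)/(μz - 1)`. -/
noncomputable def lam (R : ℝ) (z : ℂ) : ℂ := (z - (mu R : ℂ)) / ((mu R : ℂ) * z - 1)

/-- The shifted Zhukovsky-type map `ψ(w) = Rw - 1 + 1/(Rw - 1)`. -/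
noncomputable def psi (R : ℝ) (w : ℂ) : ℂ := (R : ℂ) * w - 1 + ((R : ℂ) * w - 1)⁻¹

/-- `χ(t) = t ∑_{k ∈ ℤ} μ^{4k} exp((μ - 1/μ) μ^{4k} t)`. -/
noncomputable def chi (R : ℝ) (t : ℂ) : ℂ :=
  t * ∑' k : ℤ, (mu R : ℂ) ^ (4 * k) *
    Complex.exp (((mu R : ℂ) - (mu R : ℂ)⁻¹) * (mu R : ℂ) ^ (4 * k) * t)

/-- The region `D = {t : |t - 1/R| < 1/R, Re t > Rμ²/2}`. -/
def Dset (R : ℝ) : Set ℂ :=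
  {t | ‖t - 1 / (R : ℂ)‖ < 1 / R ∧ R * (mu R) ^ 2 / 2 < t.re}

/-- The region `𝔇 = {w : |w - R/(R²-1)| > 1/(R²-1), |w| < 1}`. -/
def frakD (R : ℝ) : Set ℂ :=
  {w | 1 / (R ^ 2 - 1) < ‖w - (R : ℂ) / (((R : ℝ) ^ 2 - 1 : ℝ) : ℂ)‖ ∧
    ‖w‖ < 1}

/-- The orthogonality domain `G₁ = ψ(𝔇)`. -/
noncomputable def G1 (R : ℝ) : Set ℂ := psi R '' frakD R

/-- `p` is the sequence of Carleman (Bergman) orthonormal polynomials of `G₁`: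
`p n` has degree `n`, real positive leading coefficient, and
`(1/π) ∫_{G₁} pₙ conj(pₘ) dA = δ_{n,m}`. -/
def IsCarleman (R : ℝ) (p : ℕ → Polynomial ℂ) : Prop :=
  (∀ n, (p n).natDegree = n) ∧
  (∀ n, 0 < (p n).leadingCoeff.re ∧ (p n).leadingCoeff.im = 0) ∧
  (∀ n m, ∫ z in G1 R, (p n).eval z * (starRingEnd ℂ) ((p m).eval z) =
      if n = m then (Real.pi : ℂ) else 0)

/-- The limit functions `f_q` of Theorem 1.1. -/
noncomputable def fq (R q : ℝ) (t : ℂ) : ℂ :=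
  (1 - (mu R : ℂ) * t) ^ 2 * (1 - (mu R : ℂ) ^ 3 / t) ^ 2 / ((1 - (mu R : ℂ) ^ 4) * R) *
    ((chi R ((((mu R) ^ (4 * q) : ℝ) : ℂ) * t) -
        chi R ((((mu R) ^ (4 * q + 2) : ℝ) : ℂ) / t)) /
      (t - (mu R : ℂ) ^ 2 / t))

/-- `Gₙ(t) = μ^{-n} λ(t)ⁿ λ'(t)`. -/
noncomputable def Gfun (R : ℝ) (n : ℕ) (t : ℂ) : ℂ :=
  ((mu R : ℂ) ^ n)⁻¹ * (lam R t) ^ n * deriv (lam R) t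

/-- Inequality (modulo): if `μ² < |t₀| < 1` and `μ < |λ(t₀)| < 1` then
`|λ(μ^{4k} t₀)| < |λ(t₀)|` for all `k ≥ 1`. -/
lemma key (m s x y : ℝ) (hm0 : 0 < m) (hm1 : m < 1) (hs0 : 0 ≤ s) (hs1 : s < 1)
    (hr0 : 0 < x ^ 2 + y ^ 2) (hr1 : x ^ 2 + y ^ 2 < 1)
    (h3 : m ^ 2 * ((m * x - 1) ^ 2 + (m * y) ^ 2) < (x - m) ^ 2 + y ^ 2) :
    ((s * x - m) ^ 2 + (s * y) ^ 2) * ((m * x - 1) ^ 2 + (m * y) ^ 2) <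
      ((x - m) ^ 2 + y ^ 2) * ((m * (s * x) - 1) ^ 2 + (m * (s * y)) ^ 2) := by
  have hm2 : (0:ℝ) < 1 - m ^ 2 := by nlinarith
  have h0 : 2 * m * x * (1 - m ^ 2) < ((x ^ 2 + y ^ 2) * (1 + m ^ 2)) * (1 - m ^ 2) := by nlinarith
  have h2mx : 2 * m * x < (x ^ 2 + y ^ 2) * (1 + m ^ 2) := lt_of_mul_lt_mul_right h0 hm2.le
  have hb : 0 < (x ^ 2 + y ^ 2) * (1 + s) * (1 + m ^ 2) - 2 * m * x * (1 + s * (x ^ 2 + y ^ 2)) := by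
    have hsr : (0:ℝ) < 1 + s * (x ^ 2 + y ^ 2) := by nlinarith
    rcases le_or_gt x 0 with hx | hx
    · have h1 : 0 ≤ (m * (-x)) * (1 + s * (x ^ 2 + y ^ 2)) :=
        mul_nonneg (mul_nonneg hm0.le (by linarith)) hsr.le
      nlinarith [mul_pos (mul_pos hr0 (show (0:ℝ) < 1 + s by linarith))
        (show (0:ℝ) < 1 + m ^ 2 by positivity)]
    · have h1 := mul_lt_mul_of_pos_right h2mx hsr
      have h2 : 0 ≤ ((x ^ 2 + y ^ 2) * (1 + m ^ 2) * s) * (1 - (x ^ 2 + y ^ 2)) :=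
        mul_nonneg (mul_nonneg (mul_pos hr0 (by positivity)).le hs0) (by linarith)
      nlinarith
  nlinarith [mul_pos (mul_pos hm2 (show (0:ℝ) < 1 - s by linarith)) hb]

lemma mu_pos {R : ℝ} (hR : 2 < R) : 0 < mu R := by
  unfold mu
  have h : Real.sqrt (R ^ 2 - 4) < R := (Real.sqrt_lt' (by linarith)).mpr (by nlinarith)
  linarith

lemma mu_lt_one {R : ℝ} (hR : 2 < R) : mu R < 1 := by
  unfold mu
  have h : R - 2 < Real.sqrt (R ^ 2 - 4) := by
    rw [show R - 2 = Real.sqrt ((R-2) ^ 2) by rw [Real.sqrt_sq (by linarith)]]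
    exact Real.sqrt_lt_sqrt (by positivity) (by nlinarith)
  linarith

theorem stmt_10 (R : ℝ) (hR : 2 < R) (t₀ : ℂ)
    (h1 : (mu R) ^ 2 < ‖t₀‖) (h2 : ‖t₀‖ < 1)
    (h3 : mu R < ‖lam R t₀‖) (h4 : ‖lam R t₀‖ < 1) :
    ∀ k : ℕ, 1 ≤ k → ‖lam R ((mu R : ℂ) ^ (4 * k) * t₀)‖ <
      ‖lam R t₀‖ := by
  intro k hk
  set m := mu R with hm
  have hm0 : 0 < m := mu_pos hR
  have hm1 : m < 1 := mu_lt_one hR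
  set s : ℝ := m ^ (4 * k) with hs
  have hs0 : 0 ≤ s := by positivity
  have hs1 : s < 1 := pow_lt_one₀ hm0.le hm1 (by omega)
  have hcast : ((m : ℂ)) ^ (4 * k) * t₀ = (s : ℂ) * t₀ := by push_cast [hs]; ring
  rw [hcast]
  have habs_t0_pos : 0 < ‖t₀‖ := lt_trans (by positivity) h1
  have hd1 : (m : ℂ) * t₀ - 1 ≠ 0 := by
    intro h
    have h' : (m : ℂ) * t₀ = 1 := by linear_combination h
    have h'' := congrArg norm h'
    simp [Complex.norm_real, abs_of_pos hm0] at h''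
    nlinarith [mul_pos hm0 habs_t0_pos]
  have hd2 : (m : ℂ) * ((s : ℂ) * t₀) - 1 ≠ 0 := by
    intro h
    have h' : (m : ℂ) * ((s : ℂ) * t₀) = 1 := by linear_combination h
    have h'' := congrArg norm h'
    simp [Complex.norm_real, abs_of_pos hm0, _root_.abs_of_nonneg hs0] at h''
    nlinarith [mul_pos hm0 habs_t0_pos, mul_nonneg hs0 habs_t0_pos.le,
      mul_nonneg (mul_nonneg hm0.le hs0) habs_t0_pos.le]
  apply lt_of_pow_lt_pow_left₀ 2 (norm_nonneg _)
  rw [Complex.sq_norm, Complex.sq_norm]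
  unfold lam
  rw [map_div₀, map_div₀, div_lt_div_iff₀ (Complex.normSq_pos.mpr hd2) (Complex.normSq_pos.mpr hd1)]
  have hx1 : m ^ 2 * m ^ 2 < ‖t₀‖ ^ 2 := by nlinarith
  rw [Complex.sq_norm] at hx1
  have hx2 : ‖t₀‖ ^ 2 < 1 := by nlinarith
  rw [Complex.sq_norm] at hx2
  have hx3 : m ^ 2 < ‖lam R t₀‖ ^ 2 := by nlinarith
  rw [Complex.sq_norm] at hx3
  unfold lam at hx3
  rw [map_div₀, lt_div_iff₀ (Complex.normSq_pos.mpr hd1)] at hx3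
  have hkey := key m s t₀.re t₀.im hm0 hm1 hs0 hs1
    (by have := Complex.normSq_pos.mpr (show t₀ ≠ 0 by
          intro h; rw [h] at habs_t0_pos; simp at habs_t0_pos)
        simpa [Complex.normSq_apply, sq] using this)
    (by simpa [Complex.normSq_apply, sq] using hx2)
    (by simp only [Complex.normSq_apply] at hx3 ⊢
        simp only [Complex.sub_re, Complex.sub_im, Complex.mul_re, Complex.mul_im,
          Complex.ofReal_re, Complex.ofReal_im, Complex.one_re, Complex.one_im] at hx3
        nlinarith [hx3])
  simp only [Complex.normSq_apply, Complex.sub_re, Complex.sub_im, Complex.mul_re,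
    Complex.mul_im, Complex.ofReal_re, Complex.ofReal_im, Complex.one_re, Complex.one_im]
  nlinarith [hkey]
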